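/- For every nonnegative integer N, the following holds in ℤ[q]: if N is even, say N = 2M, then ∑_{π ∈ D_{≤N}} (−1)^{O(π)} q^{E(π)} = ∏_{i=0}^{M−1} (1 + q^{2i+1}); if N is odd, then ∑_{π ∈ D_{≤N}} (−1)^{O(π)} q^{E(π)} = 0. Here the sum runs over the (finitely many) partitions into distinct parts all ≤ N. -/

import Mathlib

/-- Sum of `f` over the entries of a list at even 0-based positions, i.e. over the
odd-indexed parts `λ1, λ3, λ5, …` of a partition `(λ1, λ2, λ3, …)`. -/
def sumAlt (f : ℕ → ℕ) : List ℕ → ℕ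
  | [] => 0
  | [a] => f a
  | a :: _ :: l => f a + sumAlt f l

/-- `O(π) = λ1 + λ3 + λ5 + ⋯`, the sum of the odd-indexed parts. -/
def Osum (l : List ℕ) : ℕ := sumAlt id l

/-- `E(π) = λ2 + λ4 + λ6 + ⋯`, the sum of the even-indexed parts. -/
def Esum (l : List ℕ) : ℕ := sumAlt id l.tail

/-- `γ(π) = λ1 − λ2 + λ3 − λ4 + ⋯ = O(π) − E(π)`, the alternating sum of the parts.
For a weakly decreasing list we have `Osum l ≥ Esum l`, so natural subtraction is exact. -/
def gammaSum (l : List ℕ) : ℕ := Osum l - Esum l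

/-- `⌈O⌉(π) = ∑ ⌈λ_{2i−1}/2⌉`. -/
def ceilO (l : List ℕ) : ℕ := sumAlt (fun a => (a + 1) / 2) l

/-- `⌊O⌋(π) = ∑ ⌊λ_{2i−1}/2⌋`. -/
def floorO (l : List ℕ) : ℕ := sumAlt (fun a => a / 2) l

/-- `⌈E⌉(π) = ∑ ⌈λ_{2i}/2⌉`. -/
def ceilE (l : List ℕ) : ℕ := sumAlt (fun a => (a + 1) / 2) l.tail

/-- `⌊E⌋(π) = ∑ ⌊λ_{2i}/2⌋`. -/
def floorE (l : List ℕ) : ℕ := sumAlt (fun a => a / 2) l.tail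

/-- A partition: a weakly decreasing finite list of positive integers. -/
def IsPartition (l : List ℕ) : Prop := l.Pairwise (· ≥ ·) ∧ ∀ x ∈ l, 0 < x

/-- A partition into distinct parts: a strictly decreasing finite list of positive integers. -/
def IsDistinctPartition (l : List ℕ) : Prop := l.Pairwise (· > ·) ∧ ∀ x ∈ l, 0 < x

/-- The Gaussian binomial coefficient `[n choose k]_q` as a polynomial in `q`
(defined by the q-Pascal recurrence; it equals `(q;q)_n / ((q;q)_k (q;q)_{n−k})`). -/
noncomputable def qbinom : ℕ → ℕ → Polynomial ℤ
  | _, 0 => 1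
  | 0, _ + 1 => 0
  | n + 1, k + 1 => qbinom n k + Polynomial.X ^ (k + 1) * qbinom n (k + 1)

section Aux

open Polynomial Finset

/-- The finite set of strictly decreasing lists of positive integers ≤ N. -/
def Dset : ℕ → Finset (List ℕ)
  | 0 => {[]}
  | N + 1 => Dset N ∪ (Dset N).image ((N + 1) :: ·)

lemma Osum_cons (a : ℕ) (l : List ℕ) : Osum (a :: l) = a + Esum l := by
  cases l with
  | nil => simp [Osum, Esum, sumAlt]
  | cons b r => simp [Osum, Esum, sumAlt]

lemma Esum_cons (a : ℕ) (l : List ℕ) : Esum (a :: l) = Osum l := rfl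

lemma mem_Dset : ∀ N l, l ∈ Dset N ↔ (IsDistinctPartition l ∧ ∀ x ∈ l, x ≤ N) := by
  intro N
  induction N with
  | zero =>
    intro l
    simp only [Dset, Finset.mem_singleton]
    constructor
    · rintro rfl; exact ⟨⟨List.Pairwise.nil, by simp⟩, by simp⟩
    · rintro ⟨⟨_, hpos⟩, hle⟩
      cases l with
      | nil => rfl
      | cons a r => exact absurd (hle a (by simp)) (by have := hpos a (by simp); omega)
  | succ N ih =>
    intro l
    simp only [Dset, Finset.mem_union, Finset.mem_image]
    constructor
    · rintro (h | ⟨l', hl', rfl⟩)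
      · obtain ⟨hd, hle⟩ := ih l |>.mp h
        exact ⟨hd, fun x hx => Nat.le_succ_of_le (hle x hx)⟩
      · obtain ⟨⟨hs, hpos⟩, hle⟩ := ih l' |>.mp hl'
        refine ⟨⟨List.pairwise_cons.mpr ⟨fun b hb => ?_, hs⟩, ?_⟩, ?_⟩
        · have := hle b hb; omega
        · intro x hx
          rcases List.mem_cons.mp hx with rfl | hx
          · omega
          · exact hpos x hx
        · intro x hx
          rcases List.mem_cons.mp hx with rfl | hx
          · exact le_refl _
          · exact Nat.le_succ_of_le (hle x hx)
    · rintro ⟨⟨hs, hpos⟩, hle⟩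
      cases l with
      | nil =>
        left; exact (ih []).mpr ⟨⟨List.Pairwise.nil, by simp⟩, by simp⟩
      | cons a r =>
        have hsr := (List.pairwise_cons.mp hs)
        by_cases ha : a ≤ N
        · left
          refine (ih _).mpr ⟨⟨hs, hpos⟩, ?_⟩
          intro x hx
          rcases List.mem_cons.mp hx with rfl | hx
          · exact ha
          · have := hsr.1 x hx; omega
        · right
          have haN : a = N + 1 := by have := hle a (by simp); omega
          subst haN
          refine ⟨r, (ih r).mpr ⟨⟨hsr.2, fun x hx => hpos x (by simp [hx])⟩,
            fun x hx => by have := hsr.1 x hx; omega⟩, rfl⟩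

noncomputable def Fsum (N : ℕ) : Polynomial ℤ :=
  ∑ l ∈ Dset N, (-1 : Polynomial ℤ) ^ Osum l * Polynomial.X ^ Esum l

noncomputable def Gsum (N : ℕ) : Polynomial ℤ :=
  ∑ l ∈ Dset N, (-1 : Polynomial ℤ) ^ Esum l * Polynomial.X ^ Osum l

lemma Dset_disjoint (N : ℕ) : Disjoint (Dset N) ((Dset N).image ((N + 1) :: ·)) := by
  rw [Finset.disjoint_left]
  rintro l hl hl'
  obtain ⟨l', _, rfl⟩ := Finset.mem_image.mp hl'
  have := ((mem_Dset N _).mp hl).2 (N + 1) (by simp)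
  omega

lemma Fsum_succ (N : ℕ) : Fsum (N + 1) = Fsum N + (-1) ^ (N + 1) * Gsum N := by
  unfold Fsum Gsum
  rw [show Dset (N + 1) = Dset N ∪ (Dset N).image ((N + 1) :: ·) from rfl,
    Finset.sum_union (Dset_disjoint N),
    Finset.sum_image (by intro a _ b _ h; exact (List.cons.injEq _ _ _ _ ▸ h).2),
    Finset.mul_sum]
  congr 1
  apply Finset.sum_congr rfl
  intro l _
  rw [Osum_cons, Esum_cons, pow_add]
  ring

lemma Gsum_succ (N : ℕ) : Gsum (N + 1) = Gsum N + Polynomial.X ^ (N + 1) * Fsum N := by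
  unfold Fsum Gsum
  rw [show Dset (N + 1) = Dset N ∪ (Dset N).image ((N + 1) :: ·) from rfl,
    Finset.sum_union (Dset_disjoint N),
    Finset.sum_image (by intro a _ b _ h; exact (List.cons.injEq _ _ _ _ ▸ h).2),
    Finset.mul_sum]
  congr 1
  apply Finset.sum_congr rfl
  intro l _
  rw [Osum_cons, Esum_cons, pow_add]
  ring

noncomputable def Pprod (M : ℕ) : Polynomial ℤ :=
  ∏ i ∈ Finset.range M, (1 + Polynomial.X ^ (2 * i + 1))

lemma FG_values : ∀ M : ℕ, Fsum (2 * M) = Pprod M ∧ Gsum (2 * M) = Pprod M ∧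
    Fsum (2 * M + 1) = 0 ∧ Gsum (2 * M + 1) = Pprod (M + 1) := by
  intro M
  induction M with
  | zero =>
    have h0F : Fsum 0 = 1 := by simp [Fsum, Dset, Osum, Esum, sumAlt]
    have h0G : Gsum 0 = 1 := by simp [Gsum, Dset, Osum, Esum, sumAlt]
    refine ⟨by simpa [Pprod] using h0F, by simpa [Pprod] using h0G, ?_, ?_⟩
    · rw [show (2 * 0 + 1) = 0 + 1 from rfl, Fsum_succ, h0F, h0G]; ring
    · rw [show (2 * 0 + 1) = 0 + 1 from rfl, Gsum_succ, h0F, h0G]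
      simp [Pprod, mul_comm]
  | succ M ih =>
    obtain ⟨hF, hG, hF1, hG1⟩ := ih
    have e1 : 2 * (M + 1) = (2 * M + 1) + 1 := by ring
    have hF2 : Fsum (2 * (M + 1)) = Pprod (M + 1) := by
      rw [e1, Fsum_succ, hF1, hG1]
      have h : (-1 : Polynomial ℤ) ^ (2 * M + 1 + 1) = 1 := by
        rw [show 2 * M + 1 + 1 = 2 * (M + 1) from by ring, pow_mul]; norm_num
      rw [h]; ring
    have hG2 : Gsum (2 * (M + 1)) = Pprod (M + 1) := by
      rw [e1, Gsum_succ, hF1, hG1]; ring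
    refine ⟨hF2, hG2, ?_, ?_⟩
    · rw [Fsum_succ, hF2, hG2]
      have h : (-1 : Polynomial ℤ) ^ (2 * (M + 1) + 1) = -1 := by
        rw [pow_succ, pow_mul]; norm_num
      rw [h]; ring
    · rw [Gsum_succ, hF2, hG2]
      have : Pprod (M + 1 + 1) = Pprod (M + 1) * (1 + Polynomial.X ^ (2 * (M + 1) + 1)) := by
        simp [Pprod, Finset.prod_range_succ]
      rw [this]; ring

end Aux

/-- In `ℤ[q]`: `∑_{π ∈ D_{≤N}} (−1)^{O(π)} q^{E(π)}` equals `∏_{i=0}^{N/2−1} (1 + q^{2i+1})`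
when `N` is even, and `0` when `N` is odd. -/
theorem signed_odd_even_gf (N : ℕ) :
    ∑ᶠ l ∈ {l : List ℕ | IsDistinctPartition l ∧ ∀ x ∈ l, x ≤ N},
      ((-1 : Polynomial ℤ)) ^ Osum l * Polynomial.X ^ Esum l
    = if N % 2 = 0 then ∏ i ∈ Finset.range (N / 2), (1 + Polynomial.X ^ (2 * i + 1))
      else 0 := by
  have hset : {l : List ℕ | IsDistinctPartition l ∧ ∀ x ∈ l, x ≤ N} = ↑(Dset N) := by
    ext l; simp [mem_Dset]
  rw [hset, finsum_mem_coe_finset]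
  rcases Nat.even_or_odd N with ⟨M, rfl⟩ | ⟨M, rfl⟩
  · have h := (FG_values M).1
    rw [show M + M = 2 * M from by ring]
    simp only [Nat.mul_mod_right, if_pos rfl]
    rw [show 2 * M / 2 = M from by omega]
    exact h
  · have h := (FG_values M).2.2.1
    rw [if_neg (by omega)]
    exact h
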